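/- Let μ* be the Borel probability measure on ℝ with distribution function F(x) = (1/2)·(1 + x/√(x²+1)). Then for every α∈(0,1), ES_α(μ*) = √((1-α)/α). -/

import Mathlib

open MeasureTheory Set

/-- The distribution function of a measure: `F_μ(x) = μ((-∞, x])`. -/
noncomputable def distFun (μ : Measure ℝ) (x : ℝ) : ℝ := (μ (Iic x)).toReal

/-- The lower quantile of order `α`: `q_α(μ) = inf {x : F_μ(x) ≥ α}`. -/
noncomputable def lowerQuantile (μ : Measure ℝ) (α : ℝ) : ℝ :=
  sInf {x : ℝ | α ≤ distFun μ x}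

/-- The Value-at-Risk of order `α`: `VaR_α(μ) = -q_α(μ)`. -/
noncomputable def VaR (μ : Measure ℝ) (α : ℝ) : ℝ := - lowerQuantile μ α

/-- The Expected Shortfall of order `α`: `ES_α(μ) = (1/α) ∫₀^α VaR_u(μ) du`. -/
noncomputable def ES (μ : Measure ℝ) (α : ℝ) : ℝ :=
  (1 / α) * ∫ u in (0 : ℝ)..α, VaR μ u

private lemma fstrict : StrictMono (fun x : ℝ => x / Real.sqrt (x ^ 2 + 1)) := by
  have key : ∀ x : ℝ, HasDerivAt (fun x : ℝ => x / Real.sqrt (x ^ 2 + 1))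
      (1 / (Real.sqrt (x ^ 2 + 1)) ^ 3) x := by
    intro x
    have hpos : (0:ℝ) < x ^ 2 + 1 := by positivity
    have hs : (0:ℝ) < Real.sqrt (x ^ 2 + 1) := Real.sqrt_pos.2 hpos
    have hs2 : Real.sqrt (x ^ 2 + 1) ^ 2 = x ^ 2 + 1 := Real.sq_sqrt hpos.le
    have hinner : HasDerivAt (fun x : ℝ => x ^ 2 + 1) (2 * x) x := by
      simpa using ((hasDerivAt_pow 2 x).add_const 1)
    have hsq : HasDerivAt (fun x : ℝ => Real.sqrt (x ^ 2 + 1))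
        (1 / (2 * Real.sqrt (x ^ 2 + 1)) * (2 * x)) x :=
      (Real.hasDerivAt_sqrt (ne_of_gt hpos)).comp x hinner
    have hdiv : HasDerivAt (fun x : ℝ => x / Real.sqrt (x ^ 2 + 1)) _ x :=
      (hasDerivAt_id x).div hsq (ne_of_gt hs)
    convert hdiv using 1
    set s := Real.sqrt (x ^ 2 + 1)
    field_simp
    rw [id_eq]
    linear_combination (-1) * hs2
  apply strictMono_of_deriv_pos
  intro x
  rw [(key x).deriv]
  positivity

private lemma quantile_formula (μs : Measure ℝ)
    (hF : ∀ x : ℝ, distFun μs x = (1 / 2) * (1 + x / Real.sqrt (x ^ 2 + 1)))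
    {u : ℝ} (hu : u ∈ Ioo (0:ℝ) 1) :
    lowerQuantile μs u = (2 * u - 1) / (2 * Real.sqrt (u * (1 - u))) := by
  obtain ⟨hu0, hu1⟩ := hu
  set s := Real.sqrt (u * (1 - u)) with hs_def
  have hspos : 0 < s := Real.sqrt_pos.2 (by nlinarith)
  have hs2 : s ^ 2 = u * (1 - u) := Real.sq_sqrt (by nlinarith)
  set q := (2 * u - 1) / (2 * s) with hq_def
  have hq21 : q ^ 2 + 1 = (1 / (2 * s)) ^ 2 := by
    rw [hq_def]
    field_simp
    nlinarith [hs2]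
  have hsqrt : Real.sqrt (q ^ 2 + 1) = 1 / (2 * s) := by
    rw [hq21, Real.sqrt_sq (by positivity)]
  have hinv : s * s⁻¹ = 1 := mul_inv_cancel₀ hspos.ne'
  have hFq : distFun μs q = u := by
    rw [hF, hsqrt]
    field_simp
    linear_combination (2 * u - 1) * hinv
  have hmono : StrictMono (fun x : ℝ => distFun μs x) := by
    intro a b hab
    have h := fstrict hab
    simp only [hF]
    nlinarith [h]
  have hset : {x : ℝ | u ≤ distFun μs x} = Ici q := by
    ext x
    simp only [mem_setOf_eq, mem_Ici]
    rw [← hFq]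
    exact ⟨fun h => hmono.le_iff_le.mp h, fun h => hmono.le_iff_le.mpr h⟩
  rw [lowerQuantile, hset, csInf_Ici]

/-- If `μ*` is the Borel probability measure on ℝ with distribution function
`F(x) = (1/2)(1 + x/√(x²+1))`, then `ES_α(μ*) = √((1-α)/α)` for every
`α ∈ (0,1)`. -/
theorem expected_shortfall_maximal_stop_loss_measure
    (μs : Measure ℝ) [IsProbabilityMeasure μs]
    (hF : ∀ x : ℝ, distFun μs x = (1 / 2) * (1 + x / Real.sqrt (x ^ 2 + 1)))
    (α : ℝ) (hα : α ∈ Ioo (0 : ℝ) 1) :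
    ES μs α = Real.sqrt ((1 - α) / α) := by
  obtain ⟨hα0, hα1⟩ := hα
  set g : ℝ → ℝ := fun u => Real.sqrt (u - u ^ 2) with hg_def
  set g' : ℝ → ℝ := fun u => (1 - 2 * u) / (2 * Real.sqrt (u - u ^ 2)) with hg'_def
  have hcongr : ∫ u in (0:ℝ)..α, VaR μs u = ∫ u in (0:ℝ)..α, g' u := by
    apply intervalIntegral.integral_congr_ae
    filter_upwards with u hu
    rw [Set.uIoc_of_le hα0.le] at hu
    have huo : u ∈ Ioo (0:ℝ) 1 := ⟨hu.1, lt_of_le_of_lt hu.2 hα1⟩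
    rw [VaR, quantile_formula μs hF huo]
    have huu : u * (1 - u) = u - u ^ 2 := by ring
    rw [hg'_def]
    simp only
    rw [← huu]
    ring
  have hmeas : Measurable g' := by
    apply Measurable.div
    · fun_prop
    · exact (continuous_const.mul (Real.continuous_sqrt.comp (by continuity))).measurable
  have hint : IntervalIntegrable g' volume 0 α := by
    rw [intervalIntegrable_iff_integrableOn_Ioc_of_le hα0.le]
    have hb : IntegrableOn (fun u : ℝ => (1 / (2 * Real.sqrt (1 - α))) * u ^ (-(1/2) : ℝ))
        (Ioc 0 α) volume := by
      have := (intervalIntegral.intervalIntegrable_rpow' (a := 0) (b := α)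
        (r := -(1/2)) (by norm_num)).const_mul (1 / (2 * Real.sqrt (1 - α)))
      rw [intervalIntegrable_iff_integrableOn_Ioc_of_le hα0.le] at this
      exact this
    apply Integrable.mono' hb hmeas.aestronglyMeasurable
    rw [ae_restrict_iff' measurableSet_Ioc]
    filter_upwards with u hu
    obtain ⟨hu0, huα⟩ := hu
    have hu1 : u < 1 := lt_of_le_of_lt huα hα1
    have hsu : (0:ℝ) < Real.sqrt u := Real.sqrt_pos.2 hu0
    have hs1α : (0:ℝ) < Real.sqrt (1 - α) := Real.sqrt_pos.2 (by linarith)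
    have hs1u : Real.sqrt (1 - α) ≤ Real.sqrt (1 - u) := Real.sqrt_le_sqrt (by linarith)
    have hsplit : Real.sqrt (u - u ^ 2) = Real.sqrt u * Real.sqrt (1 - u) := by
      rw [show u - u ^ 2 = u * (1 - u) by ring, Real.sqrt_mul hu0.le]
    have hrpow : u ^ (-(1/2) : ℝ) = 1 / Real.sqrt u := by
      rw [Real.rpow_neg hu0.le, Real.sqrt_eq_rpow]
      exact (one_div _).symm
    have habs : |1 - 2 * u| ≤ 1 := by
      rw [abs_le]; constructor <;> linarith
    rw [hg'_def]
    simp only [Real.norm_eq_abs]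
    rw [abs_div, hsplit, hrpow]
    have hden : |2 * (Real.sqrt u * Real.sqrt (1 - u))| =
        2 * (Real.sqrt u * Real.sqrt (1 - u)) := by
      rw [abs_of_nonneg]; positivity
    rw [hden]
    rw [show (1:ℝ) / (2 * Real.sqrt (1 - α)) * (1 / Real.sqrt u)
        = 1 / (2 * (Real.sqrt u * Real.sqrt (1 - α))) by ring]
    gcongr
  have hcont : ContinuousOn g (Icc 0 α) :=
    (Real.continuous_sqrt.comp (by continuity)).continuousOn
  have hderiv : ∀ x ∈ Ioo (0:ℝ) α, HasDerivWithinAt g (g' x) (Ioi x) x := by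
    intro x hx
    obtain ⟨hx0, hxα⟩ := hx
    have hx1 : x < 1 := lt_trans hxα hα1
    have hpos : (0:ℝ) < x - x ^ 2 := by nlinarith
    have hinner : HasDerivAt (fun u : ℝ => u - u ^ 2) (1 - 2 * x) x := by
      have : HasDerivAt (fun u : ℝ => u - u ^ 2) _ x := (hasDerivAt_id x).sub (hasDerivAt_pow 2 x)
      simpa using this
    have := (Real.hasDerivAt_sqrt hpos.ne').comp x hinner
    have hEq : 1 / (2 * Real.sqrt (x - x ^ 2)) * (1 - 2 * x) = g' x := by
      rw [hg'_def]; ring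
    rw [hEq] at this
    exact this.hasDerivWithinAt
  have hFTC : ∫ u in (0:ℝ)..α, g' u = g α - g 0 :=
    intervalIntegral.integral_eq_sub_of_hasDeriv_right_of_le hα0.le hcont hderiv hint
  have hg0 : g 0 = 0 := by simp [hg_def]
  have hgα : g α = Real.sqrt α * Real.sqrt (1 - α) := by
    rw [hg_def]
    simp only
    rw [show α - α ^ 2 = α * (1 - α) by ring, Real.sqrt_mul hα0.le]
  rw [ES, hcongr, hFTC, hg0, hgα,
    Real.sqrt_div (by linarith : (0:ℝ) ≤ 1 - α) α]
  have hsα : (0:ℝ) < Real.sqrt α := Real.sqrt_pos.2 hα0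
  have hsq : Real.sqrt α ^ 2 = α := Real.sq_sqrt hα0.le
  field_simp
  linear_combination Real.sqrt (1 - α) * hsq
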